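/- arXiv:2012.13057 — 2 statements merged into one kernel-verified Lean document; each statement's English description precedes it below -/
import Mathlib

section
/- Let G be a simple graph on a finite vertex type V, let φ : Sym2 V → Fin K assign a class to each edge, let s ≠ g be vertices, and suppose the set Π(s,g) of paths from s to g is nonempty. If a path π ∈ Π(s,g) minimizes the class-count vector θ(π) with respect to the colex order over Π(s,g), then π lies in the optimal path set Π*, i.e., the pair (maxClass(π), θ(π)(maxClass(π))) is minimal in the lexicographic order on pairs over all paths in Π(s,g). -/
open scoped NNReal

/-- The colexicographic strict order on `Fin K → ℕ`. -/
def ColexLt {K : ℕ} (a b : Fin K → ℕ) : Prop :=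
  ∃ k, a k < b k ∧ ∀ j, k < j → a j = b j

/-- The colexicographic order: `a ≤_colex b` iff `a <_colex b` or `a = b`. -/
def ColexLe {K : ℕ} (a b : Fin K → ℕ) : Prop :=
  ColexLt a b ∨ a = b

/-- The class-count vector of a walk: `theta G φ w k` is the number of edges of `w`
(with multiplicity) whose class under `φ` is `k`. -/
def theta {V : Type*} {K : ℕ} (G : SimpleGraph V) (φ : Sym2 V → Fin K)
    {s g : V} (w : G.Walk s g) : Fin K → ℕ :=
  fun k => w.edges.countP (fun e => decide (φ e = k))

/-- The total weight of a walk: the sum of `c` over its edges (with multiplicity). -/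
def weight {V : Type*} (G : SimpleGraph V) (c : Sym2 V → ℝ≥0)
    {s g : V} (w : G.Walk s g) : ℝ≥0 :=
  (w.edges.map c).sum

/-- The largest class `k` with `theta G φ w k > 0`, for a walk with at least one edge. -/
def maxClass {V : Type*} {K : ℕ} (G : SimpleGraph V) (φ : Sym2 V → Fin K)
    {s g : V} (w : G.Walk s g) (hw : w.edges ≠ []) : Fin K :=
  (Finset.univ.filter fun k => 0 < theta G φ w k).max' (by
    obtain ⟨e, he⟩ := List.exists_mem_of_ne_nil w.edges hw
    refine ⟨φ e, ?_⟩
    simp only [Finset.mem_filter, Finset.mem_univ, true_and, theta]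
    exact Finset.mem_filter.mpr ⟨Finset.mem_univ _, List.countP_pos_iff.mpr ⟨e, he, by simp⟩⟩)

/-- A walk between distinct vertices has at least one edge. -/
theorem edges_ne_nil_of_ne {V : Type*} {G : SimpleGraph V} {s g : V}
    (h : s ≠ g) (w : G.Walk s g) : w.edges ≠ [] := by
  cases w with
  | nil => exact absurd rfl h
  | cons h' p => simp

/-- Lexicographic order on pairs `(maxClass, count)`. -/
def PairLe {K : ℕ} (p q : Fin K × ℕ) : Prop :=
  p.1 < q.1 ∨ (p.1 = q.1 ∧ p.2 ≤ q.2)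

/-- Lexicographic order on keys `(class-count vector, weight)`:
first the colex order on the vectors, then the usual order on weights. -/
def KeyLe {K : ℕ} (p q : (Fin K → ℕ) × ℝ≥0) : Prop :=
  ColexLt p.1 q.1 ∨ (p.1 = q.1 ∧ p.2 ≤ q.2)


theorem le_maxClass {V : Type*} {K : ℕ} (G : SimpleGraph V) (φ : Sym2 V → Fin K)
    {s g : V} (w : G.Walk s g) (hw : w.edges ≠ []) {k : Fin K}
    (h : 0 < theta G φ w k) : k ≤ maxClass G φ w hw :=
  Finset.le_max' _ k (Finset.mem_filter.mpr ⟨Finset.mem_univ _, h⟩)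

theorem maxClass_pos {V : Type*} {K : ℕ} (G : SimpleGraph V) (φ : Sym2 V → Fin K)
    {s g : V} (w : G.Walk s g) (hw : w.edges ≠ []) :
    0 < theta G φ w (maxClass G φ w hw) := by
  have := Finset.max'_mem (Finset.univ.filter fun k => 0 < theta G φ w k)
    (Finset.filter_nonempty_iff.mpr ?_)
  · exact (Finset.mem_filter.mp this).2
  · obtain ⟨e, he⟩ := List.exists_mem_of_ne_nil w.edges hw
    refine ⟨φ e, Finset.mem_univ _, ?_⟩
    exact List.countP_pos_iff.mpr ⟨e, he, by simp⟩

theorem theta_eq_zero_of_maxClass_lt {V : Type*} {K : ℕ} (G : SimpleGraph V)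
    (φ : Sym2 V → Fin K) {s g : V} (w : G.Walk s g) (hw : w.edges ≠ []) {j : Fin K}
    (h : maxClass G φ w hw < j) : theta G φ w j = 0 := by
  by_contra hne
  exact absurd (le_maxClass G φ w hw (Nat.pos_of_ne_zero hne)) (not_le.mpr h)

/-- If a path `π` from `s` to `g` minimizes the class-count vector `theta` in the colex
order over all paths from `s` to `g`, then `π` lies in the optimal path set `Π*`: the pair
`(maxClass π, theta π (maxClass π))` is minimal in the lexicographic order over all paths. -/
theorem mem_optimal_set_of_colex_min {V : Type*} [Fintype V] {K : ℕ}
    (G : SimpleGraph V) (φ : Sym2 V → Fin K) (s g : V) (hsg : s ≠ g)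
    (hne : ∃ p : G.Walk s g, p.IsPath)
    (π : G.Walk s g) (hπ : π.IsPath)
    (hmin : ∀ p : G.Walk s g, p.IsPath → ColexLe (theta G φ π) (theta G φ p)) :
    ∀ p : G.Walk s g, p.IsPath →
      PairLe
        (maxClass G φ π (edges_ne_nil_of_ne hsg π),
          theta G φ π (maxClass G φ π (edges_ne_nil_of_ne hsg π)))
        (maxClass G φ p (edges_ne_nil_of_ne hsg p),
          theta G φ p (maxClass G φ p (edges_ne_nil_of_ne hsg p))) := by
  intro p hp
  set mπ := maxClass G φ π (edges_ne_nil_of_ne hsg π) with hmπ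
  set mp := maxClass G φ p (edges_ne_nil_of_ne hsg p) with hmp
  rcases hmin p hp with ⟨k, hk, hup⟩ | h
  · -- strict colex
    have hkp : 0 < theta G φ p k := lt_of_le_of_lt (Nat.zero_le _) hk
    have hkmp : k ≤ mp := le_maxClass G φ p _ hkp
    have hle : mπ ≤ mp := by
      by_contra hlt
      push_neg at hlt
      have h1 : theta G φ π mπ = theta G φ p mπ := hup mπ (lt_of_le_of_lt hkmp hlt)
      have h2 : theta G φ p mπ = 0 := theta_eq_zero_of_maxClass_lt G φ p _ hlt
      have := maxClass_pos G φ π (edges_ne_nil_of_ne hsg π)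
      rw [← hmπ, h1, h2] at this
      exact lt_irrefl 0 this
    rcases lt_or_eq_of_le hle with hlt | heq
    · exact Or.inl hlt
    · refine Or.inr ⟨heq, ?_⟩
      rcases lt_or_eq_of_le hkmp with hkm | hkm
      · rw [heq]
        exact le_of_eq (hup mp hkm)
      · rw [heq, ← hkm]
        exact le_of_lt hk
  · -- equal vectors
    have h1 : 0 < theta G φ p mπ := by
      rw [← h]; exact maxClass_pos G φ π _
    have h2 : 0 < theta G φ π mp := by
      rw [h]; exact maxClass_pos G φ p _
    have heq : mπ = mp := le_antisymm (le_maxClass G φ p _ h1) (le_maxClass G φ π _ h2)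
    exact Or.inr ⟨heq, by rw [heq, h]⟩
end

section
/- Let G be a simple graph on a finite vertex type V, let φ : Sym2 V → Fin K assign a class to each edge, let c : Sym2 V → ℝ≥0 assign a weight to each edge, and let π* be a path from s to g whose key (θ(π*), weight(π*)) is minimal, with respect to the lexicographic order combining the colex order on class-count vectors and the usual order on weights, among all paths from s to g. Then for every walk w from s to g, the key of π* satisfies (θ(π*), weight(π*)) ≤ (θ(w), weight(w)) in the same lexicographic order. -/
open scoped NNReal

private lemma sublist_sum_le {l₁ l₂ : List ℝ≥0} (h : l₁.Sublist l₂) :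
    l₁.sum ≤ l₂.sum := by
  induction h with
  | slnil => exact le_refl _
  | cons a _ ih => simpa using le_trans ih (le_add_self)
  | cons_cons a _ ih => simpa using ih

private lemma colexLt_trans {K : ℕ} {a b c : Fin K → ℕ}
    (h1 : ColexLt a b) (h2 : ColexLt b c) : ColexLt a c := by
  obtain ⟨k1, hk1, hj1⟩ := h1
  obtain ⟨k2, hk2, hj2⟩ := h2
  rcases lt_trichotomy k1 k2 with h | h | h
  · exact ⟨k2, (hj1 k2 h) ▸ hk2, fun j hj => (hj1 j (h.trans hj)).trans (hj2 j hj)⟩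
  · exact ⟨k1, hk1.trans (h ▸ hk2), fun j hj => (hj1 j hj).trans (hj2 j (h ▸ hj))⟩
  · exact ⟨k1, lt_of_lt_of_le hk1 (le_of_eq (hj2 k1 h)), fun j hj =>
      (hj1 j hj).trans (hj2 j (h.trans hj))⟩

private lemma keyLe_trans {K : ℕ} {p q r : (Fin K → ℕ) × ℝ≥0}
    (h1 : KeyLe p q) (h2 : KeyLe q r) : KeyLe p r := by
  rcases h1 with h1 | ⟨he1, hw1⟩
  · rcases h2 with h2 | ⟨he2, hw2⟩
    · exact Or.inl (colexLt_trans h1 h2)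
    · exact Or.inl (he2 ▸ h1)
  · rcases h2 with h2 | ⟨he2, hw2⟩
    · exact Or.inl (he1 ▸ h2)
    · exact Or.inr ⟨he1.trans he2, hw1.trans hw2⟩

private lemma pointwise_le_keyLe {K : ℕ} {a b : Fin K → ℕ} {x y : ℝ≥0}
    (h : ∀ k, a k ≤ b k) (hxy : a = b → x ≤ y) : KeyLe (a, x) (b, y) := by
  by_cases hab : a = b
  · exact Or.inr ⟨hab, hxy hab⟩
  · left
    have hne : (Finset.univ.filter fun k => a k ≠ b k).Nonempty := by
      rcases Function.ne_iff.mp hab with ⟨k, hk⟩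
      exact ⟨k, by simp [hk]⟩
    set k := (Finset.univ.filter fun k => a k ≠ b k).max' hne with hkdef
    have hkmem := (Finset.univ.filter fun k => a k ≠ b k).max'_mem hne
    simp only [Finset.mem_filter, Finset.mem_univ, true_and] at hkmem
    refine ⟨k, lt_of_le_of_ne (h k) hkmem, fun j hj => ?_⟩
    by_contra hjne
    exact absurd (Finset.le_max' _ j (by simp [hjne])) (not_le.mpr hj)

/-- If a path `π*` from `s` to `g` is key-minimal (key = `(theta, weight)` compared
lexicographically, colex on vectors first, then weight) among all paths from `s` to `g`,
then it is key-minimal among all walks from `s` to `g`. -/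
theorem key_min_over_paths_implies_over_walks {V : Type*} [Fintype V] {K : ℕ}
    (G : SimpleGraph V) (φ : Sym2 V → Fin K) (c : Sym2 V → ℝ≥0) {s g : V}
    (π : G.Walk s g) (hπ : π.IsPath)
    (hmin : ∀ p : G.Walk s g, p.IsPath →
      KeyLe (theta G φ π, weight G c π) (theta G φ p, weight G c p)) :
    ∀ w : G.Walk s g,
      KeyLe (theta G φ π, weight G c π) (theta G φ w, weight G c w) := by
  classical
  intro w
  have hp := hmin w.bypass w.bypass_isPath
  refine keyLe_trans hp ?_
  have hsub : w.bypass.edges.Subperm w.edges :=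
    w.bypass_isPath.edges_nodup.subperm (SimpleGraph.Walk.edges_bypass_subset w)
  obtain ⟨l, hperm, hsl⟩ := hsub
  have htheta : ∀ k, theta G φ w.bypass k ≤ theta G φ w k := fun k => by
    unfold theta
    calc w.bypass.edges.countP (fun e => decide (φ e = k))
        = l.countP _ := (hperm.countP_eq _).symm
      _ ≤ _ := hsl.countP_le
  have hweight : weight G c w.bypass ≤ weight G c w := by
    unfold weight
    calc (w.bypass.edges.map c).sum = (l.map c).sum := ((hperm.map c).sum_eq).symm
      _ ≤ _ := sublist_sum_le (hsl.map c)
  exact pointwise_le_keyLe htheta (fun _ => hweight)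
end
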